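/- For the walk on ℕ starting at 0 with rule (k) ↝ (0)(2)(3)...(k-1)(k+1) (move to any position in [0,k-1] except 1, or to k+1), the generating function of all walks by length is F(z,1) = (3 - 3z² - 2z³ - (1+z)√(1-2z-3z²)) / (2(1 - z - z² + z³ + z⁴)), with expansion 1 + z + 2z² + 3z³ + 6z⁴ + 12z⁵ + O(z⁶). -/

import Mathlib

open PowerSeries

noncomputable section Aux13

/-- Riordan-number-like sequence. -/
def rq : ℕ → ℚ
  | 0 => 1
  | n+1 =>
      (∑ i ∈ (Finset.range (n+1)).attach, rq i.1 * rq (n - i.1))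
      + (∑ i ∈ (Finset.range n).attach, rq i.1 * rq (n - 1 - i.1))
      - rq n
  decreasing_by
  · have := Finset.mem_range.mp i.2; omega
  · omega
  · have := Finset.mem_range.mp i.2; omega
  · omega
  · omega

lemma rq_zero : rq 0 = 1 := by rw [rq]

lemma rq_succ (n : ℕ) : rq (n+1) =
    (∑ i ∈ Finset.range (n+1), rq i * rq (n - i))
      + (∑ i ∈ Finset.range n, rq i * rq (n - 1 - i)) - rq n := by
  rw [rq]
  rw [Finset.sum_attach _ (fun i => rq i * rq (n - i)),
    Finset.sum_attach _ (fun i => rq i * rq (n - 1 - i))]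

def Rs : PowerSeries ℚ := mk rq

lemma coeff_R2 (m : ℕ) : (coeff m) (Rs * Rs) = ∑ i ∈ Finset.range (m+1), rq i * rq (m - i) := by
  rw [coeff_mul, Finset.Nat.sum_antidiagonal_eq_sum_range_succ_mk]
  simp [Rs]

lemma hRs : (1 + X) * (X * (Rs * Rs)) + 1 = (1 + X) * Rs := by
  ext n
  have e1 : ∀ (A : PowerSeries ℚ) (n : ℕ),
      coeff (n+1) ((1+X) * A) = coeff (n+1) A + coeff n A := by
    intro A n
    rw [add_mul, one_mul, map_add, coeff_succ_X_mul]
  cases n with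
  | zero => simp [Rs, rq_zero]
  | succ n =>
    rw [map_add, e1, e1, coeff_succ_X_mul]
    have hone : coeff (n+1) (1 : PowerSeries ℚ) = 0 := by
      simp
    rw [hone, add_zero]
    cases n with
    | zero =>
      simp only [coeff_R2, Rs, coeff_mk]
      rw [show (0:ℕ)+1 = 1 from rfl, rq_succ 0]
      norm_num [rq_zero]
    | succ m =>
      rw [coeff_succ_X_mul, coeff_R2, coeff_R2]
      simp only [Rs, coeff_mk]
      rw [rq_succ (m+1)]
      simp only [Nat.add_sub_cancel]
      ring

def Vq : PowerSeries ℚ := X * Rs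

lemma hV : (1 + X) * (Vq * Vq) = (1 + X) * Vq - X := by
  unfold Vq; linear_combination X * hRs

lemma hKc : constantCoeff (1 - Vq - X^2) ≠ 0 := by
  have : constantCoeff (1 - Vq - X^2) = 1 := by
    simp [Vq, map_sub, map_pow]
  rw [this]; norm_num

lemma hK : (1 - Vq - X^2) * (1 - Vq - X^2)⁻¹ = 1 :=
  PowerSeries.mul_inv_cancel _ hKc

def T1 : PowerSeries ℚ := X * (1 - Vq - X^2)⁻¹

def Cs : ℕ → PowerSeries ℚ := fun k =>
  if k = 0 then 1 + X * T1 else (1 - Vq) * Vq^(k-1) * T1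

lemma coeff_X_pow_mul_zero {j n : ℕ} (A : PowerSeries ℚ) (h : n < j) :
    coeff n (X^j * A) = 0 := by
  rw [PowerSeries.coeff_X_pow_mul', if_neg (by omega)]

lemma VT_pow (a : ℕ) : Vq^a * T1 = X^(a+1) * (Rs^a * (1 - Vq - X^2)⁻¹) := by
  unfold T1
  generalize (1 - Vq - X^2)⁻¹ = J
  unfold Vq
  rw [mul_pow]; ring

lemma coeff_VT_zero {a n : ℕ} (h : n < a + 1) : coeff n (Vq^a * T1) = 0 := by
  rw [VT_pow, coeff_X_pow_mul_zero _ h]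

lemma coeff_Cs_zero {k n : ℕ} (h : n < k) : coeff n (Cs k) = 0 := by
  obtain ⟨j, rfl⟩ : ∃ j, k = j + 1 := ⟨k - 1, by omega⟩
  have : Cs (j+1) = X^(j+1) * ((1 - Vq) * (Rs^j * (1 - Vq - X^2)⁻¹)) := by
    unfold Cs
    rw [if_neg (by omega)]
    simp only [Nat.add_sub_cancel]
    rw [mul_assoc, VT_pow]; ring
  rw [this, coeff_X_pow_mul_zero _ h]

lemma tail_sum : ∀ (m a n : ℕ), 1 ≤ a → n + 1 - a ≤ m →
    ∑ j ∈ Finset.Icc a n, coeff n (Cs j) = coeff n (Vq^(a-1) * T1) := by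
  intro m
  induction m with
  | zero =>
    intro a n ha h
    rw [Finset.Icc_eq_empty (by omega), Finset.sum_empty,
      coeff_VT_zero (by omega)]
  | succ m ih =>
    intro a n ha h
    by_cases hc : n < a
    · rw [Finset.Icc_eq_empty (by omega), Finset.sum_empty,
        coeff_VT_zero (by omega)]
    · push_neg at hc
      have hsplit : Finset.Icc a n = insert a (Finset.Icc (a+1) n) := by
        ext x; simp only [Finset.mem_Icc, Finset.mem_insert]; omega
      rw [hsplit, Finset.sum_insert (by simp only [Finset.mem_Icc]; omega),
        ih (a+1) n (by omega) (by omega)]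
      rw [← map_add]
      congr 1
      obtain ⟨j, rfl⟩ : ∃ j, a = j + 1 := ⟨a - 1, by omega⟩
      unfold Cs
      rw [if_neg (by omega)]
      simp only [Nat.add_sub_cancel]
      ring

end Aux13

/-- walks on ℕ starting at 0 where from k the allowed moves are to any
position in [0,k-1] except 1, or to k+1. The generating function of all walks by
length is F(z) = (3 - 3z² - 2z³ - (1+z)√(1-2z-3z²)) / (2(1 - z - z² + z³ + z⁴)),
with expansion 1 + z + 2z² + 3z³ + 6z⁴ + 12z⁵ + O(z⁶). -/
theorem stmt_13 (c : ℕ → ℕ → ℕ)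
    (h0 : ∀ k, c 0 k = if k = 0 then 1 else 0)
    (hbound : ∀ n k, n < k → c n k = 0)
    (hstep0 : ∀ n, c (n + 1) 0 = ∑ j ∈ Finset.Icc 1 n, c n j)
    (hstep1 : ∀ n, c (n + 1) 1 = c n 0)
    (hstep : ∀ n k, 2 ≤ k →
      c (n + 1) k = c n (k - 1) + ∑ j ∈ Finset.Icc (k + 1) n, c n j)
    (f : ℕ → ℕ) (hf : ∀ n, f n = ∑ k ∈ Finset.range (n + 1), c n k)
    (F : PowerSeries ℚ) (hF : F = mk fun n => (f n : ℚ)) :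
    (∃ S : PowerSeries ℚ, S ^ 2 = 1 - 2 * X - 3 * X ^ 2 ∧ constantCoeff (R := ℚ) S = 1 ∧
      2 * (1 - X - X ^ 2 + X ^ 3 + X ^ 4) * F = 3 - 3 * X ^ 2 - 2 * X ^ 3 - (1 + X) * S) ∧
    f 0 = 1 ∧ f 1 = 1 ∧ f 2 = 2 ∧ f 3 = 3 ∧ f 4 = 6 ∧ f 5 = 12 := by
  have key : ∀ n k, (c n k : ℚ) = coeff n (Cs k) := by
    intro n
    induction n with
    | zero =>
      intro k
      rw [h0]
      cases k with
      | zero =>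
        unfold Cs
        rw [if_pos rfl, if_pos rfl]
        simp [T1]
      | succ j =>
        rw [if_neg (by omega), coeff_Cs_zero (by omega)]
        norm_num
    | succ n ih =>
      intro k
      match k with
      | 0 =>
        rw [hstep0 n]
        push_cast
        rw [Finset.sum_congr rfl (fun j _ => ih j),
          tail_sum (n+1) 1 n le_rfl (by omega)]
        unfold Cs
        rw [if_pos rfl, map_add, coeff_succ_X_mul,
          show (1:ℕ)-1 = 0 from rfl, pow_zero, one_mul, coeff_one,
          if_neg (Nat.succ_ne_zero n), zero_add]
      | 1 =>
        rw [hstep1 n, ih 0]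
        have hid : Cs 1 = X * Cs 0 := by
          unfold Cs
          rw [if_neg one_ne_zero, if_pos rfl]
          simp only [show (1:ℕ)-1 = 0 from rfl, pow_zero, mul_one]
          unfold T1
          linear_combination X * hK
        rw [hid, coeff_succ_X_mul]
      | (j+2) =>
        rw [hstep n (j+2) (by omega)]
        push_cast
        rw [Finset.sum_congr rfl (fun l _ => ih l),
          tail_sum (n+1) (j+3) n (by omega) (by omega)]
        simp only [show j+3-1 = j+2 from rfl]
        rw [ih (j+1)]
        have hid : Cs (j+2) = X * (Cs (j+1) + Vq^(j+2) * T1) := by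
          unfold Cs
          rw [if_neg (by omega), if_neg (by omega)]
          simp only [show j+2-1 = j+1 from rfl, show j+1-1 = j from rfl]
          linear_combination (-(Vq^j * T1)) * hV
        rw [hid, coeff_succ_X_mul, map_add]
  have hFE : F = 1 + (1+X) * T1 := by
    rw [hF]
    ext n
    rw [coeff_mk, hf]
    push_cast
    have hsplit : Finset.range (n+1) = insert 0 (Finset.Icc 1 n) := by
      ext x; simp only [Finset.mem_range, Finset.mem_insert, Finset.mem_Icc]; omega
    rw [hsplit, Finset.sum_insert (by simp), key n 0,
      Finset.sum_congr rfl (fun j _ => key n j),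
      tail_sum (n+1) 1 n le_rfl (by omega)]
    rw [← map_add]
    congr 1
    unfold Cs
    rw [if_pos rfl, pow_zero]
    ring
  have hc10 : c 1 0 = 0 := by rw [hstep0]; simp
  have hc11 : c 1 1 = 1 := by rw [hstep1, h0]; rfl
  have hc20 : c 2 0 = 1 := by
    rw [hstep0]; rw [show Finset.Icc 1 1 = {1} from rfl, Finset.sum_singleton, hc11]
  have hc21 : c 2 1 = 0 := by rw [hstep1, hc10]
  have hc22 : c 2 2 = 1 := by
    rw [hstep (1:ℕ) 2 le_rfl, hc11, Finset.Icc_eq_empty (by omega), Finset.sum_empty]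
    omega
  have hc30 : c 3 0 = 1 := by
    rw [hstep0, show Finset.Icc 1 2 = {1, 2} from rfl, Finset.sum_insert (by decide),
      Finset.sum_singleton, hc21, hc22]
  have hc31 : c 3 1 = 1 := by rw [hstep1, hc20]
  have hc32 : c 3 2 = 0 := by
    rw [hstep (2:ℕ) 2 le_rfl, hc21, Finset.Icc_eq_empty (by omega), Finset.sum_empty]
    omega
  have hc33 : c 3 3 = 1 := by
    rw [hstep (2:ℕ) 3 (by omega), hc22, Finset.Icc_eq_empty (by omega), Finset.sum_empty]
    omega
  have hc40 : c 4 0 = 2 := by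
    rw [hstep0, show Finset.Icc 1 3 = {1, 2, 3} from rfl, Finset.sum_insert (by decide),
      Finset.sum_insert (by decide), Finset.sum_singleton, hc31, hc32, hc33]
    omega
  have hc41 : c 4 1 = 1 := by rw [hstep1, hc30]
  have hc42 : c 4 2 = 2 := by
    rw [hstep (3:ℕ) 2 le_rfl, hc31, show Finset.Icc 3 3 = {3} from rfl,
      Finset.sum_singleton, hc33]
  have hc43 : c 4 3 = 0 := by
    rw [hstep (3:ℕ) 3 (by omega), hc32, Finset.Icc_eq_empty (by omega), Finset.sum_empty]
    omega
  have hc44 : c 4 4 = 1 := by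
    rw [hstep (3:ℕ) 4 (by omega), hc33, Finset.Icc_eq_empty (by omega), Finset.sum_empty]
    omega
  have hc50 : c 5 0 = 4 := by
    rw [hstep0, show Finset.Icc 1 4 = {1, 2, 3, 4} from rfl, Finset.sum_insert (by decide),
      Finset.sum_insert (by decide), Finset.sum_insert (by decide), Finset.sum_singleton,
      hc41, hc42, hc43, hc44]
    omega
  have hc51 : c 5 1 = 2 := by rw [hstep1, hc40]
  have hc52 : c 5 2 = 2 := by
    rw [hstep (4:ℕ) 2 le_rfl, hc41, show Finset.Icc 3 4 = {3, 4} from rfl,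
      Finset.sum_insert (by decide), Finset.sum_singleton, hc43, hc44]
    omega
  have hc53 : c 5 3 = 3 := by
    rw [hstep (4:ℕ) 3 (by omega), hc42, show Finset.Icc 4 4 = {4} from rfl,
      Finset.sum_singleton, hc44]
  have hc54 : c 5 4 = 0 := by
    rw [hstep (4:ℕ) 4 (by omega), hc43, Finset.Icc_eq_empty (by omega), Finset.sum_empty]
    omega
  have hc55 : c 5 5 = 1 := by
    rw [hstep (4:ℕ) 5 (by omega), hc44, Finset.Icc_eq_empty (by omega), Finset.sum_empty]
    omega
  refine ⟨⟨1 + X - 2*(1+X)*Vq, ?_, ?_, ?_⟩, ?_, ?_, ?_, ?_, ?_, ?_⟩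
  · linear_combination (4*(1+X)) * hV
  · simp [Vq, map_sub, map_mul]
  · rw [hFE]
    unfold T1
    linear_combination (2*(1 - Vq - X^2)⁻¹*(1+X)) * hV + (2*(1+X)^2*(Vq - X^2)) * hK
  · rw [hf]; simp [h0]
  · rw [hf, Finset.sum_range_succ, Finset.sum_range_one, hc10, hc11]
  · rw [hf]; simp [Finset.sum_range_succ, hc20, hc21, hc22]
  · rw [hf]; simp [Finset.sum_range_succ, hc30, hc31, hc32, hc33]
  · rw [hf]; simp [Finset.sum_range_succ, hc40, hc41, hc42, hc43, hc44]
  · rw [hf]; simp [Finset.sum_range_succ, hc50, hc51, hc52, hc53, hc54, hc55]
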